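/- Let G be a finite group acting on a unital ring B by ring automorphisms, and assume the order |G| is invertible in B. Let M be a left module over the twisted group ring B⋊G. If M is finitely generated and projective as a left B-module (via the inclusion B ⊆ B⋊G), then M is finitely generated and projective as a left B⋊G-module. -/

import Mathlib

set_option linter.unusedSectionVars false

noncomputable section

namespace Paper

variable (A : Type*) [Ring A] (G : Type*) [Group G] [MulSemiringAction G A]

/-- The twisted group ring (crossed product) `A⋊G`: the free left `A`-module with basis `G`,
with multiplication determined by `(a·g)(b·h) = (a * g(b))·(gh)`. -/
def CrossedProduct : Type _ := G →₀ A

namespace CrossedProduct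

instance : AddCommGroup (CrossedProduct A G) := inferInstanceAs (AddCommGroup (G →₀ A))

instance {k : Type*} [Semiring k] [Module k A] : Module k (CrossedProduct A G) :=
  inferInstanceAs (Module k (G →₀ A))

variable {A G}

/-- The element `a·g` of the crossed product. -/
def single (g : G) (a : A) : CrossedProduct A G := Finsupp.single g a

theorem single_add (g : G) (a b : A) :
    (single g (a + b) : CrossedProduct A G) = single g a + single g b :=
  Finsupp.single_add g a b

theorem single_zero (g : G) : (single g 0 : CrossedProduct A G) = 0 :=
  Finsupp.single_zero g

theorem induction_linear {p : CrossedProduct A G → Prop} (f : CrossedProduct A G)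
    (h0 : p 0) (hadd : ∀ f g, p f → p g → p (f + g)) (hsingle : ∀ (g : G) (a : A), p (single g a)) :
    p f :=
  Finsupp.induction_linear f h0 hadd hsingle

noncomputable instance : Mul (CrossedProduct A G) :=
  ⟨fun f h => Finsupp.sum (f : G →₀ A) fun g a =>
    Finsupp.sum (h : G →₀ A) fun g' b => Finsupp.single (g * g') (a * g • b)⟩

theorem mul_def (f h : CrossedProduct A G) :
    f * h = Finsupp.sum (f : G →₀ A) fun g a =>
      Finsupp.sum (h : G →₀ A) fun g' b =>
        (single (g * g') (a * g • b) : CrossedProduct A G) := rfl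

noncomputable instance : One (CrossedProduct A G) := ⟨single 1 1⟩

theorem one_def : (1 : CrossedProduct A G) = single 1 1 := rfl

private theorem mul_zero' (f : CrossedProduct A G) : f * 0 = 0 := by
  rw [mul_def]
  exact Finset.sum_eq_zero fun g _ => Finsupp.sum_zero_index

private theorem zero_mul' (f : CrossedProduct A G) : 0 * f = 0 :=
  Finsupp.sum_zero_index

private theorem mul_add' (f h k : CrossedProduct A G) : f * (h + k) = f * h + f * k := by
  rw [mul_def, mul_def, mul_def]
  erw [← Finsupp.sum_add]
  refine Finsupp.sum_congr fun g _ => ?_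
  exact Finsupp.sum_add_index' (f := (h : G →₀ A)) (g := k) (fun g' => by simp [single_zero])
    (fun g' b c => by simp [mul_add, smul_add, single_add])

private theorem add_mul' (f h k : CrossedProduct A G) : (f + h) * k = f * k + h * k := by
  rw [mul_def, mul_def, mul_def]
  refine (Finsupp.sum_add_index' (f := (f : G →₀ A)) (g := h) (fun g => ?_) (fun g a b => ?_)).trans rfl
  · exact Finset.sum_eq_zero fun g' _ => by simp [single_zero]
  erw [← Finsupp.sum_add]
  refine Finsupp.sum_congr fun g' _ => ?_
  simp [add_mul, single_add]

theorem single_mul_single (g g' : G) (a b : A) :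
    (single g a * single g' b : CrossedProduct A G) = single (g * g') (a * g • b) := by
  rw [mul_def]
  erw [Finsupp.sum_single_index (Finset.sum_eq_zero fun _ _ => by simp [single_zero]),
    Finsupp.sum_single_index (by simp [single_zero])]

private theorem one_mul' (f : CrossedProduct A G) : 1 * f = f := by
  induction f using induction_linear with
  | h0 => exact mul_zero' 1
  | hadd f g hf hg => rw [mul_add', hf, hg]
  | hsingle g a => rw [one_def, single_mul_single, one_mul, one_smul, one_mul]

private theorem mul_one' (f : CrossedProduct A G) : f * 1 = f := by
  induction f using induction_linear with
  | h0 => exact zero_mul' 1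
  | hadd f g hf hg => rw [add_mul', hf, hg]
  | hsingle g a => rw [one_def, single_mul_single, mul_one, smul_one, mul_one]

private theorem mul_assoc' (f h k : CrossedProduct A G) : f * h * k = f * (h * k) := by
  induction f using induction_linear with
  | h0 => rw [zero_mul', zero_mul', zero_mul']
  | hadd f₁ f₂ h₁ h₂ => rw [add_mul', add_mul', add_mul', h₁, h₂]
  | hsingle g a =>
    induction h using induction_linear with
    | h0 => rw [mul_zero', zero_mul', mul_zero']
    | hadd h₁ h₂ ih₁ ih₂ => rw [mul_add', add_mul', ih₁, ih₂, add_mul', mul_add']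
    | hsingle g' b =>
      induction k using induction_linear with
      | h0 => rw [mul_zero', mul_zero', mul_zero']
      | hadd k₁ k₂ ih₁ ih₂ => rw [mul_add', ih₁, ih₂, mul_add', mul_add']
      | hsingle g'' c =>
        rw [single_mul_single, single_mul_single, single_mul_single, single_mul_single,
          mul_assoc, mul_smul, smul_mul', mul_assoc]

noncomputable instance : Ring (CrossedProduct A G) :=
  { (inferInstanceAs (AddCommGroup (CrossedProduct A G)) : AddCommGroup (CrossedProduct A G)),
    (inferInstanceAs (Mul (CrossedProduct A G)) : Mul (CrossedProduct A G)),
    (inferInstanceAs (One (CrossedProduct A G)) : One (CrossedProduct A G)) with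
    left_distrib := mul_add'
    right_distrib := add_mul'
    zero_mul := zero_mul'
    mul_zero := mul_zero'
    mul_assoc := mul_assoc'
    one_mul := one_mul'
    mul_one := mul_one' }

/-- The canonical inclusion of `A` into the crossed product `A⋊G`. -/
noncomputable def ι : A →+* CrossedProduct A G where
  toFun a := single 1 a
  map_one' := rfl
  map_mul' a b := by rw [single_mul_single, one_mul, one_smul]
  map_zero' := single_zero 1
  map_add' a b := single_add 1 a b

end CrossedProduct

end Paper

end

namespace Paper.CrossedProduct

variable {B : Type*} [Ring B] {G : Type*} [Group G] [MulSemiringAction G B]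

theorem ι_mul_single (b : B) (g : G) (c : B) :
    ι b * single g c = (single g (b * c) : CrossedProduct B G) := by
  show single 1 b * single g c = _
  rw [single_mul_single, one_mul, one_smul]

theorem single_mul_ι (g : G) (c b : B) :
    single g c * ι b = (single g (c * g • b) : CrossedProduct B G) := by
  show single g c * single (1:G) b = _
  rw [single_mul_single, mul_one]

theorem single_one_mul_single_inv_one (g : G) :
    (single g (1:B) : CrossedProduct B G) * single g⁻¹ 1 = 1 := by
  rw [single_mul_single, mul_inv_cancel, smul_one, mul_one, one_def]

end Paper.CrossedProduct

open Paper Paper.CrossedProduct in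
/-- Let `G` be a finite group acting on a unital ring `B` by ring
automorphisms, with `|G|` invertible in `B`.  If a module `M` over the twisted group ring
`B⋊G` is finitely generated and projective as a left `B`-module (via the inclusion
`B ⊆ B⋊G`), then `M` is finitely generated and projective as a left `B⋊G`-module. -/
theorem crossedProduct_module_finite_projective
    {B : Type*} [Ring B] {G : Type*} [Group G] [Fintype G] [MulSemiringAction G B]
    (hcard : IsUnit ((Fintype.card G : ℕ) : B))
    (M : Type*) [AddCommGroup M] [Module (CrossedProduct B G) M]
    (hfin : letI : Module B M := Module.compHom M (ι (A := B) (G := G));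
      Module.Finite B M)
    (hproj : letI : Module B M := Module.compHom M (ι (A := B) (G := G));
      Module.Projective B M) :
    Module.Finite (CrossedProduct B G) M ∧ Module.Projective (CrossedProduct B G) M := by
  letI : Module B M := Module.compHom M (ι (A := B) (G := G))
  have hfin' : Module.Finite B M := hfin
  have hproj' : Module.Projective B M := hproj
  set A := CrossedProduct B G with hA
  have hsmul : ∀ (b : B) (m : M), b • m = (ι b : A) • m := fun _ _ => rfl
  -- the inverse of `|G|` in `B`
  set n : ℕ := Fintype.card G with hn
  set v : B := ↑hcard.unit⁻¹ with hv
  have hu : (hcard.unit : B) = (n : B) := hcard.unit_spec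
  have hnv : (n : B) * v = 1 := by rw [← hu, hv]; exact hcard.unit.mul_inv
  have hvn : v * (n : B) = 1 := by rw [← hu, hv]; exact hcard.unit.inv_mul
  have hvcomm : ∀ c : B, v * c = c * v := by
    intro c
    have hc : c * (n : B) = (n : B) * c := ((Nat.cast_commute n c).symm).eq
    calc v * c = v * (c * ((n : B) * v)) := by rw [hnv, mul_one]
      _ = v * ((c * (n : B)) * v) := by rw [mul_assoc c]
      _ = v * (((n : B) * c) * v) := by rw [hc]
      _ = (v * (n : B)) * (c * v) := by rw [mul_assoc ((n : B)), ← mul_assoc]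
      _ = c * v := by rw [hvn, one_mul]
  have hgv : ∀ g : G, g • v = v := by
    intro g
    have h1 : (n : B) * (g • v) = 1 := by
      have h2 : g • ((n : B) * v) = g • (1 : B) := congrArg _ hnv
      rw [smul_mul', smul_one] at h2
      have h3 : g • ((n : ℕ) : B) = ((n : ℕ) : B) :=
        map_natCast (MulSemiringAction.toRingHom G B g) n
      rw [h3] at h2
      exact h2
    calc g • v = (v * (n : B)) * (g • v) := by rw [hvn, one_mul]
      _ = v * ((n : B) * (g • v)) := by rw [mul_assoc]
      _ = v := by rw [h1, mul_one]
  have hvA : ∀ a : A, a * ι v = ι v * a := by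
    intro a
    induction a using induction_linear with
    | h0 => rw [zero_mul, mul_zero]
    | hadd f g hf hg => rw [add_mul, mul_add, hf, hg]
    | hsingle g c => rw [single_mul_ι, ι_mul_single, hgv, hvcomm]
  -- the B-linear splitting
  obtain ⟨sB, hsB⟩ := Module.projective_def.mp hproj'
  set F : M → (M →₀ A) := fun m => (sB m).mapRange ι (map_zero ι) with hFdef
  have hFadd : ∀ m m' : M, F (m + m') = F m + F m' := by
    intro m m'
    rw [hFdef]
    simp only [map_add]
    exact Finsupp.mapRange_add (map_add ι) _ _
  have hF0 : F 0 = 0 := by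
    rw [hFdef]; simp
  have hFsmul : ∀ (b : B) (m : M), F ((ι b : A) • m) = (ι b : A) • F m := by
    intro b m
    rw [← hsmul]
    show Finsupp.mapRange ⇑ι (map_zero ι) (sB (b • m)) = _
    rw [map_smul]
    ext x
    simp [hFdef, Finsupp.mapRange_apply, Finsupp.smul_apply, smul_eq_mul, map_mul]
  have hF : ∀ m : M, Finsupp.linearCombination A id (F m) = m := by
    intro m
    rw [hFdef, Finsupp.linearCombination_apply,
      Finsupp.sum_mapRange_index (fun x => by simp)]
    have h2 := hsB m
    rw [Finsupp.linearCombination_apply] at h2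
    calc ((sB m).sum fun x b => (ι b : A) • id x)
        = (sB m).sum fun x b => b • id x := by
          refine Finsupp.sum_congr fun x _ => ?_
          rw [hsmul]
      _ = m := h2
  -- the averaged splitting
  set sFun : M → (M →₀ A) :=
    fun m => (ι v : A) • ∑ g : G, (single g (1:B) : A) • F ((single g⁻¹ (1:B) : A) • m)
    with hsFun
  have hadd : ∀ m m' : M, sFun (m + m') = sFun m + sFun m' := by
    intro m m'
    rw [hsFun]
    simp only [smul_add, hFadd]
    rw [Finset.sum_add_distrib, smul_add]
  have hs0 : sFun 0 = 0 := by
    rw [hsFun]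
    simp [smul_zero, hF0]
  have hsec : ∀ m, Finsupp.linearCombination A id (sFun m) = m := by
    intro m
    rw [hsFun]
    simp only [map_smul, map_sum, hF, smul_smul, single_one_mul_single_inv_one, one_smul]
    rw [Finset.sum_const, Finset.card_univ, ← hn, ← Nat.cast_smul_eq_nsmul A,
      smul_smul, ← map_natCast (ι : B →+* A) n, ← map_mul, hvn, map_one, one_smul]
  have hcomm : ∀ (h : G) (b : B) (m : M),
      sFun ((single h b : A) • m) = (single h b : A) • sFun m := by
    intro h b m
    have step1 : ∀ g : G,
        (single g (1:B) : A) • F ((single g⁻¹ (1:B) : A) • (single h b : A) • m)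
          = (ι b : A) • ((single g (1:B) : A) • F ((single (g⁻¹ * h) (1:B) : A) • m)) := by
      intro g
      rw [smul_smul ((single g⁻¹ (1:B)) : A), single_mul_single, one_mul,
          show (single (g⁻¹ * h) (g⁻¹ • b) : A) = ι (g⁻¹ • b) * single (g⁻¹ * h) (1:B) by
            rw [ι_mul_single, mul_one],
          mul_smul, hFsmul, smul_smul, single_mul_ι, smul_inv_smul, one_mul,
          show (single g b : A) = ι b * single g (1:B) by rw [ι_mul_single, mul_one],
          mul_smul]
    have key : (single h b : A) •
          (∑ g : G, (single g (1:B) : A) • F ((single g⁻¹ (1:B) : A) • m))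
        = (ι b : A) • ∑ g : G, (single g (1:B) : A) • F ((single (g⁻¹ * h) (1:B) : A) • m) := by
      rw [Finset.smul_sum, Finset.smul_sum]
      refine Fintype.sum_equiv (Equiv.mulLeft h) _ _ fun g => ?_
      simp only [Equiv.coe_mulLeft]
      rw [smul_smul, smul_smul, single_mul_single, smul_one, ι_mul_single,
          mul_inv_rev, inv_mul_cancel_right]
    calc sFun ((single h b : A) • m)
        = (ι v : A) • ∑ g : G,
            ((ι b : A) • ((single g (1:B) : A) • F ((single (g⁻¹ * h) (1:B) : A) • m))) := by
          rw [hsFun]; exact congrArg _ (Finset.sum_congr rfl fun g _ => step1 g)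
      _ = (ι v : A) • ((ι b : A) •
            ∑ g : G, (single g (1:B) : A) • F ((single (g⁻¹ * h) (1:B) : A) • m)) := by
          rw [← Finset.smul_sum]
      _ = (ι v : A) • ((single h b : A) •
            ∑ g : G, (single g (1:B) : A) • F ((single g⁻¹ (1:B) : A) • m)) := by
          rw [key]
      _ = (single h b : A) • sFun m := by
          rw [hsFun, smul_smul, smul_smul, ← hvA]
  let sA : M →ₗ[A] (M →₀ A) :=
    { toFun := sFun
      map_add' := hadd
      map_smul' := by
        intro a m
        simp only [RingHom.id_apply]
        induction a using induction_linear with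
        | h0 => rw [zero_smul, zero_smul, hs0]
        | hadd a₁ a₂ h₁ h₂ => rw [add_smul, hadd _ _, h₁, h₂, add_smul]
        | hsingle g c => exact hcomm g c m }
  constructor
  · -- finiteness
    obtain ⟨S, hS⟩ := hfin'.fg_top
    refine ⟨⟨S, ?_⟩⟩
    rw [eq_top_iff]
    rintro m -
    have hm : m ∈ Submodule.span B (↑S : Set M) := by rw [hS]; trivial
    refine Submodule.span_induction (p := fun x _ => x ∈ Submodule.span A (↑S : Set M))
      (fun x hx => Submodule.subset_span hx) (Submodule.zero_mem _)
      (fun x y _ _ hx hy => Submodule.add_mem _ hx hy)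
      (fun b x _ hx => Submodule.smul_mem _ ((ι b : CrossedProduct B G)) hx) hm
  · exact Module.projective_def.mpr ⟨sA, hsec⟩
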